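/- Let Γ be a group acting by homeomorphisms on a Hausdorff topological space L, and let L_hyp denote the set of points of L which are fixed by some element of Γ acting as a hyperbolic homeomorphism of L. Assume that (i) Γ contains two elements acting as transverse hyperbolic homeomorphisms of L, and (ii) for every finite subset F of Γ ∖ {1} there exists a point t ∈ L_hyp such that f·t ≠ t for all f ∈ F. Then Γ is a Powers group. -/

import Mathlib

noncomputable section

open scoped ENNReal

set_option linter.unusedSectionVars false

def HypCore {Γ : Type*} [Group Γ] (L : Type*) [TopologicalSpace L]
    [MulAction Γ L] (g : Γ) (s r : L) : Prop :=
  ∀ S ∈ nhds s, ∀ R ∈ nhds r, ∃ n₀ : ℕ, ∀ n ≥ n₀,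
    (fun x : L => (g ^ n) • x) '' Sᶜ ⊆ R ∧ (fun x : L => (g ^ n)⁻¹ • x) '' Rᶜ ⊆ S

section AuxL
variable {Γ L : Type*} [Group Γ] [TopologicalSpace L] [MulAction Γ L]

lemma smul_pow_fix {g : Γ} {x : L} (hx : g • x = x) : ∀ n : ℕ, (g ^ n) • x = x := by
  intro n
  induction n with
  | zero => simp
  | succ n ih => rw [pow_succ, mul_smul, hx, ih]

lemma hypCore_inv {g : Γ} {s r : L} (h : HypCore L g s r) : HypCore L g⁻¹ r s := by
  intro R hR S hS
  obtain ⟨n₀, hn⟩ := h S hS R hR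
  refine ⟨n₀, fun n hn' => ⟨?_, ?_⟩⟩
  · simpa [inv_pow] using (hn n hn').2
  · simpa [inv_pow] using (hn n hn').1

lemma hypCore_pow {g : Γ} {s r : L} (h : HypCore L g s r) (k : ℕ) (hk : 1 ≤ k) :
    HypCore L (g ^ k) s r := by
  intro S hS R hR
  obtain ⟨n₀, hn⟩ := h S hS R hR
  refine ⟨n₀, fun n hn' => ?_⟩
  have hkn : n₀ ≤ k * n := le_trans hn' (Nat.le_mul_of_pos_left n hk)
  have := hn (k * n) hkn
  simpa [pow_mul] using this

lemma hypCore_fixed [T1Space L] {g : Γ} {s r : L} (h : HypCore L g s r) {x : L}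
    (hx : g • x = x) : x = s ∨ x = r := by
  by_contra hc
  push_neg at hc
  obtain ⟨hxs, hxr⟩ := hc
  have hS : ({x}ᶜ : Set L) ∈ nhds s :=
    isOpen_compl_singleton.mem_nhds (by simpa using Ne.symm hxs)
  have hR : ({x}ᶜ : Set L) ∈ nhds r :=
    isOpen_compl_singleton.mem_nhds (by simpa using Ne.symm hxr)
  obtain ⟨n₀, hn⟩ := h _ hS _ hR
  have : x ∈ ({x}ᶜ : Set L) := (hn n₀ le_rfl).1 ⟨x, by simp, smul_pow_fix hx n₀⟩
  simp at this

lemma hypCore_conj (hcont : ∀ g : Γ, Continuous fun x : L => g • x)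
    {g : Γ} {s r : L} (w : Γ) (h : HypCore L g s r) :
    HypCore L (w * g * w⁻¹) (w • s) (w • r) := by
  intro S hS R hR
  have hS' : (fun x : L => w • x) ⁻¹' S ∈ nhds s :=
    ((hcont w).continuousAt (x := s)).preimage_mem_nhds hS
  have hR' : (fun x : L => w • x) ⁻¹' R ∈ nhds r :=
    ((hcont w).continuousAt (x := r)).preimage_mem_nhds hR
  obtain ⟨n₀, hn⟩ := h _ hS' _ hR'
  have hpow : ∀ n : ℕ, (w * g * w⁻¹) ^ n = w * g ^ n * w⁻¹ := fun n => conj_pow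
  refine ⟨n₀, fun n hn' => ⟨?_, ?_⟩⟩
  · rintro _ ⟨y, hy, rfl⟩
    have hy' : w⁻¹ • y ∈ ((fun x : L => w • x) ⁻¹' S)ᶜ := by
      simp only [Set.mem_compl_iff, Set.mem_preimage, smul_inv_smul]
      exact hy
    have hmem := (hn n hn').1 ⟨w⁻¹ • y, hy', rfl⟩
    have heq : ((w * g * w⁻¹) ^ n) • y = w • ((g ^ n) • (w⁻¹ • y)) := by
      rw [hpow n, mul_smul, mul_smul]
    show ((w * g * w⁻¹) ^ n) • y ∈ R
    rw [heq]
    exact hmem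
  · rintro _ ⟨y, hy, rfl⟩
    have hy' : w⁻¹ • y ∈ ((fun x : L => w • x) ⁻¹' R)ᶜ := by
      simp only [Set.mem_compl_iff, Set.mem_preimage, smul_inv_smul]
      exact hy
    have hmem := (hn n hn').2 ⟨w⁻¹ • y, hy', rfl⟩
    have heq : ((w * g * w⁻¹) ^ n)⁻¹ • y = w • ((g ^ n)⁻¹ • (w⁻¹ • y)) := by
      rw [hpow n, mul_inv_rev, mul_inv_rev, inv_inv, mul_smul, mul_smul]
    show ((w * g * w⁻¹) ^ n)⁻¹ • y ∈ S
    rw [heq]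
    exact hmem

end AuxL

/-- A group `Γ` has the Powers property if for every finite subset `F` of `Γ \\ {1}` and
every integer `N ≥ 1` there are a partition `Γ = C ⊔ D` and elements `γ₁, …, γ_N ∈ Γ` such
that `f·C ∩ C = ∅` for all `f ∈ F` and `γ_j·D ∩ γ_k·D = ∅` for all `j ≠ k`. -/
def IsPowersGroup (Γ : Type*) [Group Γ] : Prop :=
  ∀ F : Finset Γ, (1 : Γ) ∉ F → ∀ N : ℕ, 1 ≤ N →
    ∃ (C D : Set Γ) (γ : Fin N → Γ),
      C ∪ D = Set.univ ∧ Disjoint C D ∧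
      (∀ f ∈ F, Disjoint ((f * ·) '' C) C) ∧
      ∀ j k : Fin N, j ≠ k → Disjoint ((γ j * ·) '' D) ((γ k * ·) '' D)

/-- An element `g` of a group acting on a topological space `L` acts as a hyperbolic
homeomorphism if it has two fixed points `s ≠ r` (the source and the range) such that
for all neighbourhoods `S` of `s` and `R` of `r` there is `n₀` with
`gⁿ(L ∖ S) ⊆ R` and `g⁻ⁿ(L ∖ R) ⊆ S` for all `n ≥ n₀`. -/
def IsHyperbolicSMul (L : Type*) {Γ : Type*} [Group Γ] [TopologicalSpace L]
    [MulAction Γ L] (g : Γ) : Prop :=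
  ∃ s r : L, s ≠ r ∧ g • s = s ∧ g • r = r ∧
    ∀ S ∈ nhds s, ∀ R ∈ nhds r, ∃ n₀ : ℕ, ∀ n ≥ n₀,
      (fun x : L => (g ^ n) • x) '' Sᶜ ⊆ R ∧ (fun x : L => (g ^ n)⁻¹ • x) '' Rᶜ ⊆ S

/-- If a group `Γ` acts by homeomorphisms on a Hausdorff space `L`, contains two transverse
hyperbolic elements, and for every finite subset `F` of `Γ ∖ {1}` there is a point of
`L_hyp` moved by every element of `F`, then `Γ` is a Powers group. -/
theorem isPowersGroup_of_transverse_hyperbolic_pair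
    {Γ L : Type*} [Group Γ] [TopologicalSpace L] [T2Space L] [MulAction Γ L]
    (hcont : ∀ g : Γ, Continuous fun x : L => g • x)
    (hpair : ∃ g₁ g₂ : Γ, IsHyperbolicSMul L g₁ ∧ IsHyperbolicSMul L g₂ ∧
      ∀ x : L, ¬(g₁ • x = x ∧ g₂ • x = x))
    (hfaith : ∀ F : Finset Γ, (1 : Γ) ∉ F →
      ∃ t : L, (∃ h : Γ, IsHyperbolicSMul L h ∧ h • t = t) ∧ ∀ f ∈ F, f • t ≠ t) :
    IsPowersGroup Γ := by
  intro F hF N hN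
  obtain ⟨t, ⟨h₀, hhyp, hht⟩, hmoves⟩ := hfaith F hF
  obtain ⟨s₀, r₀, hsr₀, hfs₀, hfr₀, hcore₀⟩ := hhyp
  obtain ⟨h, s, hst, hcore⟩ : ∃ (h : Γ) (s : L), s ≠ t ∧ HypCore L h s t := by
    rcases hypCore_fixed hcore₀ hht with h1 | h1 <;> subst h1
    · exact ⟨h₀⁻¹, r₀, Ne.symm hsr₀, hypCore_inv hcore₀⟩
    · exact ⟨h₀, s₀, hsr₀, hcore₀⟩
  -- the neighbourhood U
  have hUex : ∀ f : Γ, ∃ Uf : Set L, IsOpen Uf ∧ t ∈ Uf ∧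
      (f ∈ F → Disjoint ((f • ·) '' Uf) Uf) := by
    intro f
    by_cases hf : f ∈ F
    · obtain ⟨A, B, hA, hB, hfA, htB, hAB⟩ := t2_separation (hmoves f hf)
      refine ⟨B ∩ (fun x : L => f • x) ⁻¹' A, hB.inter (hA.preimage (hcont f)),
        ⟨htB, hfA⟩, fun _ => ?_⟩
      rw [Set.disjoint_left]
      rintro _ ⟨y, hy, rfl⟩ hx
      exact (Set.disjoint_left.mp hAB hy.2) hx.1
    · exact ⟨Set.univ, isOpen_univ, trivial, fun hf' => absurd hf' hf⟩
  choose Uf hUfo hUft hUfd using hUex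
  set U : Set L := ⋂ f ∈ F, Uf f with hUdef
  have hUo : IsOpen U := isOpen_biInter_finset (fun f _ => hUfo f)
  have hUt : t ∈ U := Set.mem_iInter₂.mpr fun f _ => hUft f
  have hUsub : ∀ f ∈ F, U ⊆ Uf f := fun f hf => Set.biInter_subset_of_mem hf
  have hUd : ∀ f ∈ F, Disjoint ((f • ·) '' U) U := fun f hf =>
    Disjoint.mono (Set.image_mono (hUsub f hf)) (hUsub f hf) (hUfd f hf)
  -- a hyperbolic g not fixing s
  obtain ⟨g₁, g₂, hg₁, hg₂, htrans⟩ := hpair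
  obtain ⟨g, ghyp, hgs⟩ : ∃ g : Γ,
      (∃ p q : L, p ≠ q ∧ g • p = p ∧ g • q = q ∧ HypCore L g p q) ∧ g • s ≠ s := by
    by_cases h1 : g₁ • s = s
    · exact ⟨g₂, hg₂, fun h2 => htrans s ⟨h1, h2⟩⟩
    · exact ⟨g₁, hg₁, h1⟩
  obtain ⟨p, q, hpq, hgp, hgq, gcore⟩ := ghyp
  -- an element c with c•s ≠ s and c•t ≠ s
  obtain ⟨c, hcs, hct⟩ : ∃ c : Γ, c • s ≠ s ∧ c • t ≠ s := by
    by_cases hgt : g • t = s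
    · refine ⟨g ^ 2, ?_, ?_⟩
      · intro h2
        rcases hypCore_fixed (hypCore_pow gcore 2 one_le_two) h2 with e | e
        · exact hgs (by rw [e]; exact hgp)
        · exact hgs (by rw [e]; exact hgq)
      · have : (g ^ 2) • t = g • s := by rw [pow_two, mul_smul, hgt]
        rw [this]; exact hgs
    · exact ⟨g, hgs, hgt⟩
  -- push c•s, c•t into U using h
  have hS' : (({c • s} ∪ {c • t} : Set L))ᶜ ∈ nhds s := by
    refine IsOpen.mem_nhds (isClosed_singleton.union isClosed_singleton).isOpen_compl ?_
    simp only [Set.mem_compl_iff, Set.mem_union, Set.mem_singleton_iff]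
    push_neg
    exact ⟨fun e => hcs e.symm, fun e => hct e.symm⟩
  obtain ⟨m₀, hm₀⟩ := hcore _ hS' U (hUo.mem_nhds hUt)
  set w : Γ := h ^ m₀ * c with hwdef
  have hws : w • s ∈ U := by
    have h1 : c • s ∈ ((({c • s} ∪ {c • t} : Set L))ᶜ)ᶜ := by simp
    have h2 := (hm₀ m₀ le_rfl).1 ⟨c • s, h1, rfl⟩
    simpa [hwdef, mul_smul] using h2
  have hwt : w • t ∈ U := by
    have h1 : c • t ∈ ((({c • s} ∪ {c • t} : Set L))ᶜ)ᶜ := by simp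
    have h2 := (hm₀ m₀ le_rfl).1 ⟨c • t, h1, rfl⟩
    simpa [hwdef, mul_smul] using h2
  -- conjugate: a hyperbolic element with both fixed points in U
  set a : Γ := w * h * w⁻¹ with hadef
  have acore : HypCore L a (w • s) (w • t) := hypCore_conj hcont w hcore
  obtain ⟨n₀, hn⟩ := acore U (hUo.mem_nhds hws) U (hUo.mem_nhds hwt)
  set M : ℕ := n₀ + 1 with hMdef
  -- the partition
  refine ⟨{x : Γ | x • t ∈ U}, {x : Γ | x • t ∈ U}ᶜ, fun j => a ^ (((j : ℕ) + 1) * M),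
    Set.union_compl_self _, disjoint_compl_right, ?_, ?_⟩
  · intro f hf
    rw [Set.disjoint_left]
    rintro _ ⟨γc, hγc, rfl⟩ hx
    have h1 : (f * γc) • t ∈ (f • ·) '' U := ⟨γc • t, hγc, (mul_smul f γc t).symm⟩
    exact (Set.disjoint_left.mp (hUd f hf) h1) hx
  · have key : ∀ j k : Fin N, (j : ℕ) < (k : ℕ) →
        Disjoint ((a ^ (((j : ℕ) + 1) * M) * ·) '' {x : Γ | x • t ∈ U}ᶜ)
          ((a ^ (((k : ℕ) + 1) * M) * ·) '' {x : Γ | x • t ∈ U}ᶜ) := by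
      intro j k hjk
      rw [Set.disjoint_left]
      rintro _ ⟨d₁, hd₁, rfl⟩ ⟨d₂, hd₂, he⟩
      have hAB : ((j : ℕ) + 1) * M + M ≤ ((k : ℕ) + 1) * M := by
        have hk : (j : ℕ) + 2 ≤ (k : ℕ) + 1 := by omega
        calc ((j : ℕ) + 1) * M + M = ((j : ℕ) + 2) * M := by ring
          _ ≤ ((k : ℕ) + 1) * M := Nat.mul_le_mul_right M hk
      set A := ((j : ℕ) + 1) * M with hA
      set B := ((k : ℕ) + 1) * M with hB
      have hge : n₀ ≤ B - A := by omega
      have hadd : A + (B - A) = B := by omega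
      have hd : d₁ = a ^ (B - A) * d₂ := by
        have h3 : a ^ A * (a ^ (B - A) * d₂) = a ^ A * d₁ := by
          rw [← mul_assoc, ← pow_add, hadd]
          exact he
        exact (mul_left_cancel h3).symm
      have hmem : d₁ • t ∈ U := by
        rw [hd, mul_smul]
        exact (hn (B - A) hge).1 ⟨d₂ • t, hd₂, rfl⟩
      exact hd₁ hmem
    intro j k hjk
    have hne : (j : ℕ) ≠ (k : ℕ) := fun e => hjk (Fin.ext e)
    rcases lt_or_gt_of_ne hne with h1 | h1
    · exact key j k h1
    · exact (key k j h1).symm
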